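/- Let m ≥ 1, let φ be an m×m real symmetric positive definite matrix, let B be an m×m real symmetric matrix, and let k be the unique symmetric matrix solving k·φ + φ·k = 2B. Then the value (1/4)·Tr(k·φ·k) is the greatest element of the set { Tr(F·B) − Tr(F·φ·F) : F an m×m real symmetric matrix }, and it is attained at F = k/2. -/

import Mathlib

open Matrix

lemma trace_nonneg_of_posSemidef {m : ℕ} {A : Matrix (Fin m) (Fin m) ℝ}
    (hA : A.PosSemidef) : 0 ≤ A.trace := by
  apply Finset.sum_nonneg
  intro i _
  exact hA.diag_nonneg

lemma key_identity {m : ℕ} (φ k F : Matrix (Fin m) (Fin m) ℝ) :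
    ((F - ((1:ℝ)/2) • k) * φ * (F - ((1:ℝ)/2) • k)).trace
      = (F * φ * F).trace - (1/2) * (k * φ * F).trace - (1/2) * (F * φ * k).trace
        + (1/4) * (k * φ * k).trace := by
  simp only [sub_mul, mul_sub, Matrix.smul_mul, Matrix.mul_smul, trace_sub, trace_smul,
    smul_eq_mul]
  ring

theorem stmt_2 (m : ℕ) (hm : 1 ≤ m) (φ B k : Matrix (Fin m) (Fin m) ℝ)
    (hφ : φ.PosDef) (hB : B.IsSymm)
    (hk : k.IsSymm) (hkeq : k * φ + φ * k = (2 : ℝ) • B) :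
    IsGreatest
      { x : ℝ | ∃ F : Matrix (Fin m) (Fin m) ℝ, F.IsSymm ∧
          x = (F * B).trace - (F * φ * F).trace }
      ((1 / 4) * (k * φ * k).trace) ∧
    ((((1:ℝ)/2) • k) * B).trace - ((((1:ℝ)/2) • k) * φ * (((1:ℝ)/2) • k)).trace
      = (1 / 4) * (k * φ * k).trace := by
  -- general formula for the objective
  have hFB : ∀ F : Matrix (Fin m) (Fin m) ℝ,
      (F * B).trace = (1/2) * (k * φ * F).trace + (1/2) * (F * φ * k).trace := by
    intro F
    have h2 : F * (k * φ + φ * k) = (2:ℝ) • (F * B) := by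
      rw [hkeq, Matrix.mul_smul]
    have := congrArg Matrix.trace h2
    simp only [mul_add, trace_add, trace_smul, smul_eq_mul] at this
    have hc1 : (F * (k * φ)).trace = (k * φ * F).trace := by
      rw [trace_mul_comm]
    have hc2 : (F * (φ * k)).trace = (F * φ * k).trace := by
      rw [Matrix.mul_assoc]
    linarith
  have hmain : ∀ F : Matrix (Fin m) (Fin m) ℝ, F.IsSymm →
      (F * B).trace - (F * φ * F).trace
        = (1/4) * (k * φ * k).trace
          - ((F - ((1:ℝ)/2) • k) * φ * (F - ((1:ℝ)/2) • k)).trace := by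
    intro F hF
    rw [key_identity, hFB F]
    ring
  have hattain : ∀ F : Matrix (Fin m) (Fin m) ℝ, F.IsSymm →
      0 ≤ ((F - ((1:ℝ)/2) • k) * φ * (F - ((1:ℝ)/2) • k)).trace := by
    intro F hF
    set G := F - ((1:ℝ)/2) • k with hG
    have hGsymm : G.IsSymm := by
      unfold Matrix.IsSymm at *
      simp [hG, Matrix.transpose_sub, hF, hk]
    have : (Gᴴ * φ * G).PosSemidef := hφ.posSemidef.conjTranspose_mul_mul_same G
    have hGH : Gᴴ = G := by
      ext i j
      simpa using congrFun (congrFun hGsymm i) j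
    rw [hGH] at this
    exact trace_nonneg_of_posSemidef this
  constructor
  · constructor
    · exact ⟨((1:ℝ)/2) • k, hk.smul _, by
        rw [hmain _ (hk.smul _)]
        simp⟩
    · rintro x ⟨F, hF, rfl⟩
      rw [hmain F hF]
      linarith [hattain F hF]
  · have h := hmain (((1:ℝ)/2) • k) (hk.smul _)
    rw [h]; simp
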